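/- Let R be a commutative ring, n a positive integer, and I a proper ideal of R. Then I is n-absorbing if and only if for every integer m > n and all x₁, …, x_m ∈ R with x₁⋯x_m ∈ I, there are indices 1 ≤ i₁ < ⋯ < i_n ≤ m such that x_{i₁}⋯x_{i_n} ∈ I. -/

import Mathlib

/-- A proper ideal `I` is `n`-absorbing if whenever a product of `n + 1` elements
lies in `I`, the product of some `n` of them (in increasing index order) lies in `I`. -/
def IsNAbsorbing {R : Type*} [CommRing R] (n : ℕ) (I : Ideal R) : Prop :=
  ∀ x : Fin (n + 1) → R, (∏ i, x i) ∈ I →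
    ∃ ι : Fin n → Fin (n + 1), StrictMono ι ∧ (∏ j, x (ι j)) ∈ I

/-- `omegaR I` is the smallest positive integer `n` such that `I` is `n`-absorbing,
and `∞` if no such `n` exists. -/
noncomputable def omegaR {R : Type*} [CommRing R] (I : Ideal R) : ℕ∞ :=
  sInf {w : ℕ∞ | ∃ n : ℕ, 0 < n ∧ w = (n : ℕ∞) ∧ IsNAbsorbing n I}

/-- Products over lists vs products over `Fin`. -/
lemma list_prod_eq_prod_get {R : Type*} [CommRing R] (l : List R) :
    l.prod = ∏ i : Fin l.length, l.get i := by
  conv_lhs => rw [← List.ofFn_get l]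
  rw [List.prod_ofFn]

lemma Fin.strictMono_castOrderIso {a b : ℕ} (h : a = b) :
    StrictMono (Fin.cast h) := fun _ _ hij => hij

/-- Base case of the induction, in list form. -/
lemma isNAbsorbing_list_base {R : Type*} [CommRing R] {n : ℕ} {I : Ideal R}
    (h : IsNAbsorbing n I) (l : List R) (hlen : l.length = n + 1) (hl : l.prod ∈ I) :
    ∃ s : List R, s.Sublist l ∧ s.length = n ∧ s.prod ∈ I := by
  set x : Fin (n + 1) → R := fun i => l.get (Fin.cast hlen.symm i) with hx
  have hprod : (∏ i, x i) ∈ I := by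
    have : (∏ i, x i) = l.prod := by
      rw [list_prod_eq_prod_get]
      exact Fintype.prod_equiv (finCongr hlen.symm) _ _ (fun i => rfl)
    rwa [this]
  obtain ⟨ι, hmono, hι⟩ := h x hprod
  refine ⟨List.ofFn (fun j => x (ι j)), ?_, by simp, ?_⟩
  · rw [List.sublist_iff_exists_fin_orderEmbedding_get_eq]
    have hslen : (List.ofFn (fun j => x (ι j))).length = n := by simp
    refine ⟨OrderEmbedding.ofStrictMono
      (fun ix => Fin.cast hlen.symm (ι (Fin.cast hslen ix))) ?_, ?_⟩
    · exact ((Fin.strictMono_castOrderIso hlen.symm).comp hmono).comp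
        (Fin.strictMono_castOrderIso hslen)
    · intro ix
      rw [List.get_ofFn]
      rfl
  · rwa [List.prod_ofFn]

/-- List form of the absorption property for arbitrary lengths. -/
lemma isNAbsorbing_list {R : Type*} [CommRing R] {n : ℕ} {I : Ideal R}
    (h : IsNAbsorbing n I) (hn : 0 < n) :
    ∀ l : List R, n < l.length → l.prod ∈ I →
      ∃ s : List R, s.Sublist l ∧ s.length = n ∧ s.prod ∈ I := by
  have key : ∀ k : ℕ, ∀ l : List R, l.length = k → n < l.length → l.prod ∈ I →
      ∃ s : List R, s.Sublist l ∧ s.length = n ∧ s.prod ∈ I := by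
    intro k
    induction k using Nat.strong_induction_on with
    | _ k ih =>
      intro l hk hlt hl
      rcases eq_or_lt_of_le (Nat.succ_le_of_lt hlt) with heq | hgt
      · exact isNAbsorbing_list_base h l heq.symm hl
      · -- l.length ≥ n + 2 ≥ 3, so l has at least two elements
        match l, hk with
        | a :: b :: t, hk =>
          have hlt' : n < ((a * b) :: t).length := by
            simp only [List.length_cons] at hgt ⊢; omega
          have hk' : ((a * b) :: t).length = k - 1 := by
            simp only [List.length_cons] at hk ⊢; omega
          have hkk : k - 1 < k := by
            simp only [List.length_cons] at hk; omega
          have hprod : ((a * b) :: t).prod ∈ I := by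
            have : ((a * b) :: t).prod = (a :: b :: t).prod := by
              simp [mul_assoc]
            rwa [this]
          obtain ⟨s, hsub, hslen, hsprod⟩ := ih (k - 1) hkk _ hk' hlt' hprod
          cases hsub with
          | cons _ hsub =>
            exact ⟨s, (hsub.cons b).cons a, hslen, hsprod⟩
          | cons_cons _ hsub =>
            rename_i s'
            simp only [List.length_cons] at hslen
            have hulen : (a :: b :: s').length = n + 1 := by
              simp only [List.length_cons]; omega
            have huprod : (a :: b :: s').prod ∈ I := by
              have : (a :: b :: s').prod = ((a * b) :: s').prod := by
                simp [mul_assoc]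
              rw [this]; exact hsprod
            obtain ⟨v, hvsub, hvlen, hvprod⟩ := isNAbsorbing_list_base h _ hulen huprod
            exact ⟨v, hvsub.trans ((hsub.cons_cons b).cons_cons a), hvlen, hvprod⟩
  intro l hlt hl
  exact key l.length l rfl hlt hl

/-- `I` is `n`-absorbing iff for every `m > n` and every product of `m` elements lying
in `I`, the product of some `n` of them lies in `I`. -/
theorem isNAbsorbing_iff_forall_gt {R : Type*} [CommRing R] (n : ℕ) (hn : 0 < n)
    (I : Ideal R) (hI : I ≠ ⊤) :
    IsNAbsorbing n I ↔
      ∀ m : ℕ, n < m → ∀ x : Fin m → R, (∏ i, x i) ∈ I →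
        ∃ ι : Fin n → Fin m, StrictMono ι ∧ (∏ j, x (ι j)) ∈ I := by
  constructor
  · intro h m hm x hx
    have hl : (List.ofFn x).prod ∈ I := by rwa [List.prod_ofFn]
    have hlen : (List.ofFn x).length = m := by simp
    obtain ⟨s, hsub, hslen, hsprod⟩ := isNAbsorbing_list h hn (List.ofFn x)
      (by rw [hlen]; exact hm) hl
    rw [List.sublist_iff_exists_fin_orderEmbedding_get_eq] at hsub
    obtain ⟨f, hf⟩ := hsub
    refine ⟨fun j => Fin.cast hlen (f (Fin.cast hslen.symm j)), ?_, ?_⟩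
    · exact ((Fin.strictMono_castOrderIso hlen).comp f.strictMono).comp
        (Fin.strictMono_castOrderIso hslen.symm)
    · have : (∏ j : Fin n, x (Fin.cast hlen (f (Fin.cast hslen.symm j)))) = s.prod := by
        rw [list_prod_eq_prod_get]
        refine Fintype.prod_equiv (finCongr hslen.symm) _ _ (fun j => ?_)
        rw [hf (finCongr hslen.symm j), List.get_ofFn]
        rfl
      rwa [this]
  · intro h x hx
    exact h (n + 1) (Nat.lt_succ_self n) x hx
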